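/- arXiv:1303.5136 — 4 statements merged into one kernel-verified Lean document; each statement's English description precedes it below -/
import Mathlib

section
/- If G is a minimal graph (with respect to number of vertices) such that G² is not (Δ+1)-choosable where Δ is an upper bound on the maximum degree of G, then G has no vertex of degree 1. -/
open SimpleGraph

/-- The square of a graph: vertices adjacent iff at distance at most 2. -/
def SimpleGraph.square {V : Type*} (G : SimpleGraph V) : SimpleGraph V where
  Adj u v := u ≠ v ∧ (G.Adj u v ∨ ∃ w, G.Adj u w ∧ G.Adj w v)
  symm := ⟨by
    rintro u v ⟨h, h2 | ⟨w, hw1, hw2⟩⟩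
    · exact ⟨h.symm, Or.inl h2.symm⟩
    · exact ⟨h.symm, Or.inr ⟨w, hw2.symm, hw1.symm⟩⟩⟩
  loopless := ⟨fun v h => h.1 rfl⟩

/-- A graph is `k`-choosable if from every assignment of lists of size at least `k`
there is a proper coloring. -/
def SimpleGraph.Choosable {V : Type*} (G : SimpleGraph V) (k : ℕ) : Prop :=
  ∀ L : V → Finset ℕ, (∀ v, k ≤ (L v).card) →
    ∃ c : V → ℕ, (∀ v, c v ∈ L v) ∧ ∀ ⦃u v⦄, G.Adj u v → c u ≠ c v

/-- `G.MadLT x` means the maximum average degree of `G` is less than `x`: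
every nonempty subgraph `H` satisfies `2|E(H)|/|V(H)| < x`. -/
def SimpleGraph.MadLT {V : Type*} (G : SimpleGraph V) (x : ℝ) : Prop :=
  ∀ H : G.Subgraph, H.verts.Nonempty →
    2 * (H.edgeSet.ncard : ℝ) / (H.verts.ncard : ℝ) < x

/-- A minimal (w.r.t. number of vertices) graph of maximum degree at most `Δ`
whose square is not `(Δ+1)`-choosable has no vertex of degree 1. -/
theorem no_degree_one_in_minimal {V : Type*} [Fintype V] (Δ : ℕ) (G : SimpleGraph V)
    (hdeg : ∀ v, (G.neighborSet v).ncard ≤ Δ)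
    (hnot : ¬ G.square.Choosable (Δ + 1))
    (hmin : ∀ n : ℕ, n < Fintype.card V → ∀ H : SimpleGraph (Fin n),
      (∀ v, (H.neighborSet v).ncard ≤ Δ) → H.square.Choosable (Δ + 1)) :
    ∀ v, (G.neighborSet v).ncard ≠ 1 := by
  classical
  intro v hv
  -- the unique neighbor u
  obtain ⟨u, hu⟩ := Set.ncard_eq_one.mp hv
  have hadj_vu : G.Adj v u := by
    have : u ∈ G.neighborSet v := by rw [hu]; exact rfl
    exact this
  have hΔ1 : 1 ≤ Δ := hv ▸ hdeg v
  -- any two neighbors of v coincide (with u)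
  have huniq : ∀ {a : V}, G.Adj v a → a = u := by
    intro a ha
    have : a ∈ G.neighborSet v := ha
    rwa [hu, Set.mem_singleton_iff] at this
  -- set up the smaller graph
  set n := Fintype.card V - 1 with hn
  have hcard : Fintype.card {w : V // w ≠ v} = n := by
    simp [Fintype.card_subtype_compl, hn]
  have hnlt : n < Fintype.card V := by
    have : 0 < Fintype.card V := Fintype.card_pos_iff.mpr ⟨v⟩
    omega
  obtain ⟨e⟩ : Nonempty ({w : V // w ≠ v} ≃ Fin n) := ⟨Fintype.equivFinOfCardEq hcard⟩
  set f : Fin n → V := fun a => (e.symm a).1 with hf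
  have hfinj : Function.Injective f := fun a b hab => by
    have := Subtype.ext hab
    simpa using e.symm.injective this
  have hfne : ∀ a, f a ≠ v := fun a => (e.symm a).2
  set H : SimpleGraph (Fin n) := G.comap f with hH
  have hHadj : ∀ a b, H.Adj a b ↔ G.Adj (f a) (f b) := fun a b => Iff.rfl
  -- degree bound for H
  have hHdeg : ∀ a, (H.neighborSet a).ncard ≤ Δ := by
    intro a
    have h1 : (H.neighborSet a).ncard = (f '' H.neighborSet a).ncard :=
      (Set.ncard_image_of_injective _ hfinj).symm
    have h2 : f '' H.neighborSet a ⊆ G.neighborSet (f a) := by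
      rintro x ⟨b, hb, rfl⟩; exact hb
    calc (H.neighborSet a).ncard = (f '' H.neighborSet a).ncard := h1
      _ ≤ (G.neighborSet (f a)).ncard := Set.ncard_le_ncard h2 (Set.toFinite _)
      _ ≤ Δ := hdeg (f a)
  have hch := hmin n hnlt H hHdeg
  -- derive contradiction with hnot
  apply hnot
  intro L hL
  obtain ⟨c', hc'mem, hc'adj⟩ := hch (fun a => L (f a)) (fun a => hL (f a))
  -- the square-neighborhood of v is small
  have hvmem : v ∈ G.neighborSet u := hadj_vu.symm
  have hsub : G.square.neighborSet v ⊆ insert u (G.neighborSet u \ {v}) := by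
    intro w hw
    obtain ⟨hwne, h | ⟨x, hx1, hx2⟩⟩ := hw
    · exact Or.inl (huniq h)
    · have hxu : x = u := huniq hx1
      subst hxu
      exact Or.inr ⟨hx2, fun h => hwne (h ▸ rfl)⟩
  have hsmall : (G.square.neighborSet v).ncard ≤ Δ := by
    have h1 : (G.neighborSet u \ {v}).ncard = (G.neighborSet u).ncard - 1 :=
      Set.ncard_diff_singleton_of_mem hvmem
    have h2 : (insert u (G.neighborSet u \ {v})).ncard ≤ 1 + (Δ - 1) := by
      refine le_trans (Set.ncard_insert_le _ _) ?_
      have := hdeg u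
      omega
    have h3 := Set.ncard_le_ncard hsub (Set.Finite.insert _ ((Set.toFinite _).diff))
    omega
  -- the coloring of V \ {v}, with junk at v
  set g : V → ℕ := fun w => if hw : w = v then 0 else c' (e ⟨w, hw⟩) with hg
  have hgval : ∀ (w : V) (hw : w ≠ v), g w = c' (e ⟨w, hw⟩) := by
    intro w hw; simp [hg, hw]
  -- choose a color for v
  set used : Finset ℕ := (Set.toFinite (G.square.neighborSet v)).toFinset.image g with hused
  have husedcard : used.card ≤ Δ := by
    refine le_trans (Finset.card_image_le) ?_
    rw [← Set.ncard_eq_toFinset_card _ (Set.toFinite _)]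
    exact hsmall
  have hex : ∃ a ∈ L v, a ∉ used := by
    by_contra hcon
    push_neg at hcon
    have : (L v).card ≤ used.card := Finset.card_le_card hcon
    have := hL v
    omega
  obtain ⟨a, haL, haused⟩ := hex
  -- final coloring
  refine ⟨fun w => if w = v then a else g w, ?_, ?_⟩
  · intro w
    by_cases hw : w = v
    · simpa [hw] using haL
    · have := hc'mem (e ⟨w, hw⟩)
      simp only [hw, if_neg, hgval w hw]
      simpa [hf] using this
  · intro x y hxy
    have hxyne : x ≠ y := hxy.1
    show (if x = v then a else g x) ≠ (if y = v then a else g y)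
    -- square adjacency avoiding v descends to H
    have descend : ∀ {p q : V} (hp : p ≠ v) (hq : q ≠ v), G.square.Adj p q →
        H.square.Adj (e ⟨p, hp⟩) (e ⟨q, hq⟩) := by
      intro p q hp hq hpq
      obtain ⟨hne, h | ⟨w, h1, h2⟩⟩ := hpq
      · refine ⟨fun h' => hne (congrArg Subtype.val (e.injective h')), Or.inl ?_⟩
        show G.Adj (f (e ⟨p, hp⟩)) (f (e ⟨q, hq⟩))
        simp only [hf, Equiv.symm_apply_apply]
        exact h
      · have hwv : w ≠ v := by
          intro hh
          exact hne ((huniq (hh ▸ h1).symm).trans (huniq (hh ▸ h2)).symm)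
        refine ⟨fun h' => hne (congrArg Subtype.val (e.injective h')), Or.inr ⟨e ⟨w, hwv⟩, ?_, ?_⟩⟩
        · show G.Adj (f (e ⟨p, hp⟩)) (f (e ⟨w, hwv⟩))
          simp only [hf, Equiv.symm_apply_apply]; exact h1
        · show G.Adj (f (e ⟨w, hwv⟩)) (f (e ⟨q, hq⟩))
          simp only [hf, Equiv.symm_apply_apply]; exact h2
    by_cases hx : x = v
    · have hy : y ≠ v := fun h => hxyne (hx.trans h.symm)
      have hymem : y ∈ G.square.neighborSet v := hx ▸ hxy
      rw [if_pos hx, if_neg hy]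
      intro h
      exact haused (h ▸ Finset.mem_image_of_mem g ((Set.Finite.mem_toFinset _).mpr hymem))
    · by_cases hy : y = v
      · have hxmem : x ∈ G.square.neighborSet v := hy ▸ hxy.symm
        rw [if_neg hx, if_pos hy]
        intro h
        exact haused (h.symm ▸ Finset.mem_image_of_mem g ((Set.Finite.mem_toFinset _).mpr hxmem))
      · rw [if_neg hx, if_neg hy, hgval x hx, hgval y hy]
        exact hc'adj (descend hx hy hxy)
end

section
/- Let k ≥ 4 and let G be a graph with maximum degree at most k containing a path v₀v₁v₂v₃v₄v₅ where v₁, v₂, v₃, v₄ all have degree 2 in G (a 4-thread). If the square of G − v₂ − v₃ is (k+1)-choosable, then the square of G is (k+1)-choosable. -/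
open SimpleGraph

lemma pair_of_ncard_two {V : Type*} {s : Set V} (hfin : s.Finite)
    (h : s.ncard = 2) {a b : V} (ha : a ∈ s) (hb : b ∈ s) (hab : a ≠ b) :
    s = {a, b} := by
  have hsub : ({a, b} : Set V) ⊆ s := by
    intro x hx
    rcases hx with rfl | hx
    · exact ha
    · rcases hx with rfl; exact hb
  exact (Set.eq_of_subset_of_ncard_le hsub (by rw [h, Set.ncard_pair hab]) hfin).symm

/-- (C1): a 4-thread is `(k+1)`-reducible, `k ≥ 4`. -/
theorem fourThread_reducible {V : Type*} [Fintype V] (k : ℕ) (hk : 4 ≤ k)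
    (G : SimpleGraph V) (hΔ : ∀ x, (G.neighborSet x).ncard ≤ k)
    (v : Fin 6 → V) (hinj : Function.Injective v)
    (hpath : ∀ i : Fin 5, G.Adj (v i.castSucc) (v i.succ))
    (hdeg2 : ∀ i : Fin 6, i ≠ 0 → i ≠ 5 → (G.neighborSet (v i)).ncard = 2)
    (hred : ((G.induce {x | x ≠ v 2 ∧ x ≠ v 3}).square.Choosable (k + 1))) :
    G.square.Choosable (k + 1) := by
  classical
  intro L hL
  have hv : ∀ i j : Fin 6, i ≠ j → v i ≠ v j := fun i j hij h => hij (hinj h)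
  have key : ∀ (i : Fin 5) (a b : Fin 6), i.castSucc = a → i.succ = b →
      G.Adj (v a) (v b) := fun i a b ha hb => ha ▸ hb ▸ hpath i
  have h01 : G.Adj (v 0) (v 1) := key 0 0 1 (by decide) (by decide)
  have h12 : G.Adj (v 1) (v 2) := key 1 1 2 (by decide) (by decide)
  have h23 : G.Adj (v 2) (v 3) := key 2 2 3 (by decide) (by decide)
  have h34 : G.Adj (v 3) (v 4) := key 3 3 4 (by decide) (by decide)
  have h45 : G.Adj (v 4) (v 5) := key 4 4 5 (by decide) (by decide)
  have hN1 : G.neighborSet (v 1) = {v 0, v 2} :=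
    pair_of_ncard_two (Set.toFinite _) (hdeg2 1 (by decide) (by decide))
      h01.symm h12 (hv 0 2 (by decide))
  have hN2 : G.neighborSet (v 2) = {v 1, v 3} :=
    pair_of_ncard_two (Set.toFinite _) (hdeg2 2 (by decide) (by decide))
      h12.symm h23 (hv 1 3 (by decide))
  have hN3 : G.neighborSet (v 3) = {v 2, v 4} :=
    pair_of_ncard_two (Set.toFinite _) (hdeg2 3 (by decide) (by decide))
      h23.symm h34 (hv 2 4 (by decide))
  have hN4 : G.neighborSet (v 4) = {v 3, v 5} :=
    pair_of_ncard_two (Set.toFinite _) (hdeg2 4 (by decide) (by decide))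
      h34.symm h45 (hv 3 5 (by decide))
  -- characterize square neighbors of v2
  have hsq2 : ∀ y, G.square.Adj (v 2) y → y = v 0 ∨ y = v 1 ∨ y = v 3 ∨ y = v 4 := by
    rintro y ⟨hne, h | ⟨w, hw1, hw2⟩⟩
    · have hy : y ∈ G.neighborSet (v 2) := h
      rw [hN2] at hy
      rcases hy with rfl | hy
      · exact Or.inr (Or.inl rfl)
      · rcases hy with rfl; exact Or.inr (Or.inr (Or.inl rfl))
    · have hw : w ∈ G.neighborSet (v 2) := hw1
      rw [hN2] at hw
      rcases hw with rfl | hw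
      · have hy : y ∈ G.neighborSet (v 1) := hw2
        rw [hN1] at hy
        rcases hy with rfl | hy
        · exact Or.inl rfl
        · rcases hy with rfl; exact absurd rfl hne
      · rcases hw with rfl
        have hy : y ∈ G.neighborSet (v 3) := hw2
        rw [hN3] at hy
        rcases hy with rfl | hy
        · exact absurd rfl hne
        · rcases hy with rfl; exact Or.inr (Or.inr (Or.inr rfl))
  have hsq3 : ∀ y, G.square.Adj (v 3) y → y = v 1 ∨ y = v 2 ∨ y = v 4 ∨ y = v 5 := by
    rintro y ⟨hne, h | ⟨w, hw1, hw2⟩⟩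
    · have hy : y ∈ G.neighborSet (v 3) := h
      rw [hN3] at hy
      rcases hy with rfl | hy
      · exact Or.inr (Or.inl rfl)
      · rcases hy with rfl; exact Or.inr (Or.inr (Or.inl rfl))
    · have hw : w ∈ G.neighborSet (v 3) := hw1
      rw [hN3] at hw
      rcases hw with rfl | hw
      · have hy : y ∈ G.neighborSet (v 2) := hw2
        rw [hN2] at hy
        rcases hy with rfl | hy
        · exact Or.inl rfl
        · rcases hy with rfl; exact absurd rfl hne
      · rcases hw with rfl
        have hy : y ∈ G.neighborSet (v 4) := hw2
        rw [hN4] at hy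
        rcases hy with rfl | hy
        · exact absurd rfl hne
        · rcases hy with rfl; exact Or.inr (Or.inr (Or.inr rfl))
  -- coloring of the reduced graph
  obtain ⟨c', hc'mem, hc'adj⟩ := hred (fun x => L x.1) (fun x => hL x.1)
  -- transfer of adjacency for vertices away from v2, v3
  have htrans : ∀ (u w : V) (hu : u ∈ {x | x ≠ v 2 ∧ x ≠ v 3})
      (hw : w ∈ {x | x ≠ v 2 ∧ x ≠ v 3}), G.square.Adj u w →
      (G.induce {x | x ≠ v 2 ∧ x ≠ v 3}).square.Adj ⟨u, hu⟩ ⟨w, hw⟩ := by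
    rintro u w hu hw ⟨hne, h | ⟨x, hx1, hx2⟩⟩
    · exact ⟨fun hh => hne (congrArg Subtype.val hh), Or.inl h⟩
    · by_cases hx2' : x = v 2
      · rw [hx2'] at hx1 hx2
        have hu' : u ∈ G.neighborSet (v 2) := hx1.symm
        have hw' : w ∈ G.neighborSet (v 2) := hx2
        rw [hN2] at hu' hw'
        have hu1 : u = v 1 := by
          rcases hu' with rfl | hu'
          · rfl
          · rcases hu' with rfl; exact absurd rfl hu.2
        have hw1 : w = v 1 := by
          rcases hw' with rfl | hw'
          · rfl
          · rcases hw' with rfl; exact absurd rfl hw.2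
        exact absurd (hu1.trans hw1.symm) hne
      · by_cases hx3' : x = v 3
        · rw [hx3'] at hx1 hx2
          have hu' : u ∈ G.neighborSet (v 3) := hx1.symm
          have hw' : w ∈ G.neighborSet (v 3) := hx2
          rw [hN3] at hu' hw'
          have hu1 : u = v 4 := by
            rcases hu' with rfl | hu'
            · exact absurd rfl hu.1
            · rcases hu' with rfl; rfl
          have hw1 : w = v 4 := by
            rcases hw' with rfl | hw'
            · exact absurd rfl hw.1
            · rcases hw' with rfl; rfl
          exact absurd (hu1.trans hw1.symm) hne
        · exact ⟨fun hh => hne (congrArg Subtype.val hh),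
            Or.inr ⟨⟨x, hx2', hx3'⟩, hx1, hx2⟩⟩
  -- names for the already-assigned colors
  have m0 : v 0 ∈ {x | x ≠ v 2 ∧ x ≠ v 3} := ⟨hv 0 2 (by decide), hv 0 3 (by decide)⟩
  have m1 : v 1 ∈ {x | x ≠ v 2 ∧ x ≠ v 3} := ⟨hv 1 2 (by decide), hv 1 3 (by decide)⟩
  have m4 : v 4 ∈ {x | x ≠ v 2 ∧ x ≠ v 3} := ⟨hv 4 2 (by decide), hv 4 3 (by decide)⟩
  have m5 : v 5 ∈ {x | x ≠ v 2 ∧ x ≠ v 3} := ⟨hv 5 2 (by decide), hv 5 3 (by decide)⟩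
  set a0 := c' ⟨v 0, m0⟩ with ha0
  set a1 := c' ⟨v 1, m1⟩ with ha1
  set a4 := c' ⟨v 4, m4⟩ with ha4
  set a5 := c' ⟨v 5, m5⟩ with ha5
  -- pick color for v3
  have h3ne : (L (v 3) \ {a1, a4, a5}).Nonempty := by
    rw [← Finset.card_pos]
    have h1 := Finset.le_card_sdiff ({a1, a4, a5} : Finset ℕ) (L (v 3))
    have h2 : ({a1, a4, a5} : Finset ℕ).card ≤ 3 := by
      apply le_trans (Finset.card_insert_le _ _)
      have := Finset.card_insert_le a4 ({a5} : Finset ℕ)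
      simp at this ⊢; omega
    have h3 := hL (v 3)
    omega
  obtain ⟨c3, hc3⟩ := h3ne
  rw [Finset.mem_sdiff] at hc3
  obtain ⟨hc3L, hc3ne⟩ := hc3
  simp only [Finset.mem_insert, Finset.mem_singleton, not_or] at hc3ne
  obtain ⟨hc31, hc34, hc35⟩ := hc3ne
  -- pick color for v2
  have h2ne : (L (v 2) \ {a0, a1, a4, c3}).Nonempty := by
    rw [← Finset.card_pos]
    have h1 := Finset.le_card_sdiff ({a0, a1, a4, c3} : Finset ℕ) (L (v 2))
    have h2 : ({a0, a1, a4, c3} : Finset ℕ).card ≤ 4 := by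
      apply le_trans (Finset.card_insert_le _ _)
      have h := Finset.card_insert_le a1 ({a4, c3} : Finset ℕ)
      have h' := Finset.card_insert_le a4 ({c3} : Finset ℕ)
      simp at h h' ⊢; omega
    have h3 := hL (v 2)
    omega
  obtain ⟨c2, hc2⟩ := h2ne
  rw [Finset.mem_sdiff] at hc2
  obtain ⟨hc2L, hc2ne⟩ := hc2
  simp only [Finset.mem_insert, Finset.mem_singleton, not_or] at hc2ne
  obtain ⟨hc20, hc21, hc24, hc23⟩ := hc2ne
  refine ⟨fun x => if h2 : x = v 2 then c2 else if h3 : x = v 3 then c3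
    else c' ⟨x, h2, h3⟩, ?_, ?_⟩
  · intro x
    by_cases h2 : x = v 2
    · subst h2; beta_reduce; rw [dif_pos rfl]; exact hc2L
    · by_cases h3 : x = v 3
      · subst h3; beta_reduce; rw [dif_neg h2, dif_pos rfl]; exact hc3L
      · beta_reduce; rw [dif_neg h2, dif_neg h3]; exact hc'mem ⟨x, h2, h3⟩
  · intro u w huw
    have hval : ∀ (x : V) (h2 : x ≠ v 2) (h3 : x ≠ v 3),
        (if h2 : x = v 2 then c2 else if h3 : x = v 3 then c3
          else c' ⟨x, h2, h3⟩) = c' ⟨x, h2, h3⟩ := by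
      intro x h2 h3; beta_reduce; rw [dif_neg h2, dif_neg h3]
    by_cases hu2 : u = v 2
    · subst hu2
      beta_reduce; rw [dif_pos rfl]
      by_cases hw2 : w = v 2
      · exact absurd (congrArg v rfl) (hw2 ▸ huw.1)
      · by_cases hw3 : w = v 3
        · subst hw3; beta_reduce; rw [dif_neg hw2, dif_pos rfl]; exact hc23
        · beta_reduce; rw [hval w hw2 hw3]
          rcases hsq2 w huw with rfl | rfl | rfl | rfl
          · exact hc20
          · exact hc21
          · exact absurd rfl hw3
          · exact hc24
    · by_cases hu3 : u = v 3
      · subst hu3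
        beta_reduce; rw [dif_neg hu2, dif_pos rfl]
        by_cases hw2 : w = v 2
        · subst hw2; beta_reduce; rw [dif_pos rfl]; exact fun h => hc23 h.symm
        · by_cases hw3 : w = v 3
          · exact absurd hw3.symm huw.1
          · beta_reduce; rw [hval w hw2 hw3]
            rcases hsq3 w huw with rfl | rfl | rfl | rfl
            · exact hc31
            · exact absurd rfl hw2
            · exact hc34
            · exact hc35
      · beta_reduce; rw [hval u hu2 hu3]
        by_cases hw2 : w = v 2
        · subst hw2; beta_reduce; rw [dif_pos rfl]
          rcases hsq2 u huw.symm with rfl | rfl | rfl | rfl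
          · exact fun h => hc20 h.symm
          · exact fun h => hc21 h.symm
          · exact absurd rfl hu3
          · exact fun h => hc24 h.symm
        · by_cases hw3 : w = v 3
          · subst hw3; beta_reduce; rw [dif_neg hw2, dif_pos rfl]
            rcases hsq3 u huw.symm with rfl | rfl | rfl | rfl
            · exact fun h => hc31 h.symm
            · exact absurd rfl hu2
            · exact fun h => hc34 h.symm
            · exact fun h => hc35 h.symm
          · beta_reduce; rw [hval w hw2 hw3]
            exact hc'adj (htrans u w ⟨hu2, hu3⟩ ⟨hw2, hw3⟩ huw)
end

section
/- Let k ≥ 4 and let G be a graph with maximum degree at most k containing a path x u v y where u, v have degree 2 in G, x has degree at most k−1, and y has degree at most k−2. If the square of G − u − v is (k+1)-choosable, then the square of G is (k+1)-choosable. -/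
open SimpleGraph

/-- (C3): a 2-thread with endpoints of degree at most `k-1` and `k-2` is
`(k+1)`-reducible. -/
theorem twoThread_reducible {V : Type*} [Fintype V] (k : ℕ) (hk : 4 ≤ k)
    (G : SimpleGraph V) (hΔ : ∀ z, (G.neighborSet z).ncard ≤ k)
    (x u v y : V) (hnodup : ([x, u, v, y] : List V).Nodup)
    (hxu : G.Adj x u) (huv : G.Adj u v) (hvy : G.Adj v y)
    (hu : (G.neighborSet u).ncard = 2) (hv : (G.neighborSet v).ncard = 2)
    (hx : (G.neighborSet x).ncard ≤ k - 1) (hy : (G.neighborSet y).ncard ≤ k - 2)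
    (hred : ((G.induce {z | z ≠ u ∧ z ≠ v}).square.Choosable (k + 1))) :
    G.square.Choosable (k + 1) := by
  classical
  simp only [List.nodup_cons, List.mem_cons, List.mem_singleton, List.not_mem_nil,
    not_or, List.nodup_nil, and_true] at hnodup
  obtain ⟨⟨hxu', hxv', hxy', -⟩, ⟨huv', huy', -⟩, ⟨hvy', -⟩, -⟩ := hnodup
  set S : Set V := {z | z ≠ u ∧ z ≠ v} with hS
  have hxS : x ∈ S := ⟨hxu', hxv'⟩
  have hyS : y ∈ S := ⟨fun h => huy' h.symm, fun h => hvy' h.symm⟩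
  -- neighbor set identification
  have pairlem : ∀ (s : Set V) (a b : V), s.ncard = 2 → a ∈ s → b ∈ s → a ≠ b →
      s = {a, b} := by
    intro s a b h2 ha hb hab
    refine (Set.eq_of_subset_of_ncard_le ?_ ?_ s.toFinite).symm
    · exact Set.insert_subset ha (Set.singleton_subset_iff.2 hb)
    · rw [h2, Set.ncard_pair hab]
  have hNu : G.neighborSet u = {x, v} := pairlem _ _ _ hu hxu.symm huv hxv'
  have hNv : G.neighborSet v = {u, y} := pairlem _ _ _ hv huv.symm hvy huy'
  intro L hL
  obtain ⟨c', hc'mem, hc'adj⟩ := hred (fun z => L z.1) (fun z => hL z.1)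
  -- base coloring on S
  set c0 : V → ℕ := fun z => if h : z ∈ S then c' ⟨z, h⟩ else 0 with hc0
  -- forbidden sets
  set Au : Finset V := insert x (insert y ((G.neighborSet x).toFinset.erase u)) with hAu
  set Bv : Finset V := insert x (insert y ((G.neighborSet y).toFinset.erase v)) with hBv
  have hAucard : Au.card ≤ k := by
    have h1 : u ∈ (G.neighborSet x).toFinset := by
      simp [SimpleGraph.mem_neighborSet, hxu]
    have h2 : (G.neighborSet x).toFinset.card = (G.neighborSet x).ncard := by
      rw [Set.ncard_eq_toFinset_card']
    have h3 := Finset.card_erase_of_mem h1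
    have h4 := Finset.card_insert_le y ((G.neighborSet x).toFinset.erase u)
    have h5 := Finset.card_insert_le x (insert y ((G.neighborSet x).toFinset.erase u))
    rw [hAu]; omega
  have hBvcard : Bv.card ≤ k - 1 := by
    have h1 : v ∈ (G.neighborSet y).toFinset := by
      simp [SimpleGraph.mem_neighborSet, hvy.symm]
    have h2 : (G.neighborSet y).toFinset.card = (G.neighborSet y).ncard := by
      rw [Set.ncard_eq_toFinset_card']
    have h3 := Finset.card_erase_of_mem h1
    have h4 := Finset.card_insert_le y ((G.neighborSet y).toFinset.erase v)
    have h5 := Finset.card_insert_le x (insert y ((G.neighborSet y).toFinset.erase v))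
    rw [hBv]; omega
  -- pick color for u
  have hune : ((L u) \ (Au.image c0)).Nonempty := by
    rw [← Finset.card_pos]
    have h1 : (Au.image c0).card ≤ Au.card := Finset.card_image_le
    have h2 := hL u
    have h3 := Finset.le_card_sdiff (Au.image c0) (L u)
    omega
  obtain ⟨cu, hcu⟩ := hune
  rw [Finset.mem_sdiff] at hcu
  -- pick color for v
  have hvne : ((L v) \ (insert cu (Bv.image c0))).Nonempty := by
    rw [← Finset.card_pos]
    have h1 : (Bv.image c0).card ≤ Bv.card := Finset.card_image_le
    have h0 := Finset.card_insert_le cu (Bv.image c0)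
    have h2 := hL v
    have h3 := Finset.le_card_sdiff (insert cu (Bv.image c0)) (L v)
    omega
  obtain ⟨cv, hcv⟩ := hvne
  rw [Finset.mem_sdiff] at hcv
  set c : V → ℕ := fun z => if z = u then cu else if z = v then cv else c0 z with hc
  have hcS : ∀ z (hz : z ∈ S), c z = c' ⟨z, hz⟩ := by
    intro z hz
    simp only [hc, hc0, if_neg hz.1, if_neg hz.2, dif_pos hz]
  have hcu' : c u = cu := by simp [hc]
  have hcv' : c v = cv := by
    simp only [hc]
    rw [if_neg (fun h => huv' h.symm)]
    simp
  refine ⟨c, ?_, ?_⟩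
  · intro z
    by_cases hzu : z = u
    · subst hzu; rw [hcu']; exact hcu.1
    by_cases hzv : z = v
    · subst hzv; rw [hcv']; exact hcv.1
    · rw [hcS z ⟨hzu, hzv⟩]; exact hc'mem ⟨z, hzu, hzv⟩
  -- adjacency
  have key_u : ∀ b, G.square.Adj u b → c u ≠ c b := by
    intro b hb
    obtain ⟨hne, hadj⟩ := hb
    by_cases hbv : b = v
    · subst hbv; rw [hcu', hcv']
      intro h
      apply hcv.2; rw [← h]; exact Finset.mem_insert_self cu _
    · have hbS : b ∈ S := ⟨fun h => hne h.symm, hbv⟩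
      have hbAu : b ∈ Au := by
        rcases hadj with h | ⟨w, hw1, hw2⟩
        · have hmem : b ∈ G.neighborSet u := h
          rw [hNu, Set.mem_insert_iff, Set.mem_singleton_iff] at hmem
          rcases hmem with h' | h'
          · exact h' ▸ Finset.mem_insert_self x _
          · exact absurd h' hbv
        · have hwmem : w ∈ G.neighborSet u := hw1
          rw [hNu, Set.mem_insert_iff, Set.mem_singleton_iff] at hwmem
          rcases hwmem with h' | h'
          · rw [h'] at hw2
            refine Finset.mem_insert_of_mem (Finset.mem_insert_of_mem ?_)
            rw [Finset.mem_erase]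
            exact ⟨fun h => hne h.symm, by simp [SimpleGraph.mem_neighborSet, hw2]⟩
          · rw [h'] at hw2
            have hb2 : b ∈ G.neighborSet v := hw2
            rw [hNv, Set.mem_insert_iff, Set.mem_singleton_iff] at hb2
            rcases hb2 with h'' | h''
            · exact absurd h''.symm hne
            · rw [h'']
              exact Finset.mem_insert_of_mem (Finset.mem_insert_self y _)
      rw [hcu']
      have hcb : c b = c0 b := by simp [hc, hbS.1, hbS.2]
      rw [hcb]
      intro h
      apply hcu.2; rw [h]
      exact Finset.mem_image_of_mem c0 hbAu
  have key_v : ∀ b, b ≠ u → G.square.Adj v b → c v ≠ c b := by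
    intro b hbu hb
    obtain ⟨hne, hadj⟩ := hb
    have hbS : b ∈ S := ⟨hbu, fun h => hne h.symm⟩
    have hbBv : b ∈ Bv := by
      rcases hadj with h | ⟨w, hw1, hw2⟩
      · have hmem : b ∈ G.neighborSet v := h
        rw [hNv, Set.mem_insert_iff, Set.mem_singleton_iff] at hmem
        rcases hmem with h' | h'
        · exact absurd h' hbu
        · rw [h']
          exact Finset.mem_insert_of_mem (Finset.mem_insert_self y _)
      · have hwmem : w ∈ G.neighborSet v := hw1
        rw [hNv, Set.mem_insert_iff, Set.mem_singleton_iff] at hwmem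
        rcases hwmem with h' | h'
        · rw [h'] at hw2
          have hb2 : b ∈ G.neighborSet u := hw2
          rw [hNu, Set.mem_insert_iff, Set.mem_singleton_iff] at hb2
          rcases hb2 with h'' | h''
          · exact h'' ▸ Finset.mem_insert_self x _
          · exact absurd h''.symm hne
        · rw [h'] at hw2
          refine Finset.mem_insert_of_mem (Finset.mem_insert_of_mem ?_)
          rw [Finset.mem_erase]
          exact ⟨fun h => hne h.symm, by simp [SimpleGraph.mem_neighborSet, hw2]⟩
    rw [hcv']
    have hcb : c b = c0 b := by simp [hc, hbS.1, hbS.2]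
    rw [hcb]
    intro h
    apply hcv.2
    rw [h]
    exact Finset.mem_insert_of_mem (Finset.mem_image_of_mem c0 hbBv)
  have key_S : ∀ a b (ha : a ∈ S) (hb : b ∈ S), G.square.Adj a b → c a ≠ c b := by
    intro a b ha hb hab
    obtain ⟨hne, hadj⟩ := hab
    rw [hcS a ha, hcS b hb]
    apply hc'adj
    refine ⟨fun h => hne (congrArg Subtype.val h), ?_⟩
    rcases hadj with h | ⟨w, hw1, hw2⟩
    · exact Or.inl h
    · by_cases hwu : w = u
      · exfalso
        rw [hwu] at hw1 hw2
        have h1 : a ∈ G.neighborSet u := hw1.symm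
        have h2 : b ∈ G.neighborSet u := hw2
        rw [hNu, Set.mem_insert_iff, Set.mem_singleton_iff] at h1 h2
        rcases h1 with h1 | h1
        · rcases h2 with h2 | h2
          · exact hne (h1.trans h2.symm)
          · exact hb.2 h2
        · exact ha.2 h1
      · by_cases hwv : w = v
        · exfalso
          rw [hwv] at hw1 hw2
          have h1 : a ∈ G.neighborSet v := hw1.symm
          have h2 : b ∈ G.neighborSet v := hw2
          rw [hNv, Set.mem_insert_iff, Set.mem_singleton_iff] at h1 h2
          rcases h1 with h1 | h1
          · exact ha.1 h1
          · rcases h2 with h2 | h2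
            · exact hb.1 h2
            · exact hne (h1.trans h2.symm)
        · exact Or.inr ⟨⟨w, hwu, hwv⟩, hw1, hw2⟩
  intro a b hab
  by_cases hau : a = u
  · subst hau; exact key_u b hab
  by_cases hbu : b = u
  · subst hbu; exact (key_u a hab.symm).symm
  by_cases hav : a = v
  · subst hav; exact key_v b hbu hab
  by_cases hbv : b = v
  · subst hbv; exact (key_v a hau hab.symm).symm
  · exact key_S a b ⟨hau, hav⟩ ⟨hbu, hbv⟩ hab
end

section
/- Let k ≥ 5. Suppose G has maximum degree at most k and contains a cycle v₁v₂…v₄ℓ such that d(vᵢ) ≤ k when 4 divides i and d(vᵢ) = 2 otherwise. If the square of the graph obtained from G by deleting all the degree-2 vertices of this cycle is (k+1)-choosable, then G² is (k+1)-choosable. -/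
open SimpleGraph

noncomputable def pick2 (s : Finset ℕ) (b : ℕ) : ℕ :=
  if h : (s.erase b).Nonempty then h.choose else 0

lemma pick2_spec {s : Finset ℕ} (hs : 2 ≤ s.card) (b : ℕ) :
    pick2 s b ∈ s ∧ pick2 s b ≠ b := by
  have hc : s.card - 1 ≤ (s.erase b).card := Finset.pred_card_le_card_erase
  have h : (s.erase b).Nonempty := Finset.card_pos.1 (by omega)
  have hmem := h.choose_spec
  rw [Finset.mem_erase] at hmem
  rw [pick2, dif_pos h]
  exact ⟨hmem.2, hmem.1⟩

noncomputable def greedy (L : ℕ → Finset ℕ) (a : ℕ) : ℕ → ℕ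
  | 0 => a
  | t+1 => pick2 (L t) (greedy L a t)

lemma greedy_spec (L : ℕ → Finset ℕ) (a : ℕ) (t : ℕ) (h : 2 ≤ (L t).card) :
    greedy L a (t+1) ∈ L t ∧ greedy L a (t+1) ≠ greedy L a t :=
  pick2_spec h _

lemma val_add_one {n : ℕ} [NeZero n] (hn : 2 ≤ n) (i : ZMod n) :
    (i + 1).val = (i.val + 1) % n := by
  haveI : Fact (1 < n) := ⟨hn⟩
  rw [ZMod.val_add, ZMod.val_one]

lemma evenCycle_choosable (m : ℕ) (hm : 1 ≤ m) (L : ZMod (2*m) → Finset ℕ)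
    (hL : ∀ i, 2 ≤ (L i).card) :
    ∃ c : ZMod (2*m) → ℕ, (∀ i, c i ∈ L i) ∧ ∀ i, c i ≠ c (i + 1) := by
  haveI : NeZero (2*m) := ⟨by omega⟩
  have h2m : 2 ≤ 2*m := by omega
  by_cases hall : ∀ i, L (i+1) ⊆ L i
  · have hmono : ∀ (t : ℕ) (i : ZMod (2*m)), L (i + t) ⊆ L i := by
      intro t
      induction t with
      | zero => simp
      | succ t ih =>
        intro i
        have h1 : L (i + t + 1) ⊆ L (i + t) := hall _
        have h2 : L (i + ((t:ℕ)+1 : ℕ)) ⊆ L (i + t) := by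
          push_cast
          rwa [← add_assoc]
        exact h2.trans (ih i)
    have heq : ∀ i, L i = L 0 := by
      intro i
      apply subset_antisymm
      · have := hmono i.val 0
        rwa [zero_add, ZMod.natCast_zmod_val] at this
      · have := hmono (0 - i).val i
        rwa [ZMod.natCast_zmod_val, add_sub_cancel] at this
    obtain ⟨a, ha, b, hb, hab⟩ := Finset.one_lt_card.mp
      (show 1 < (L 0).card by have := hL 0; omega)
    refine ⟨fun i => if Even i.val then a else b, fun i => ?_, fun i => ?_⟩
    · dsimp only
      rw [heq i]
      split <;> assumption
    · dsimp only
      have hv := val_add_one h2m i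
      have hlt : i.val < 2*m := ZMod.val_lt i
      have hpar : Even ((i+1).val) ↔ ¬ Even i.val := by
        rcases lt_or_ge (i.val + 1) (2*m) with h | h
        · rw [hv, Nat.mod_eq_of_lt h]
          exact Nat.even_add_one
        · have hi : i.val = 2*m - 1 := by omega
          have h0 : (i+1).val = 0 := by
            rw [hv, show i.val + 1 = 2*m by omega, Nat.mod_self]
          rw [h0, hi]
          have h1 : (2*m-1) % 2 = 1 := by omega
          simp [Nat.even_iff, h1]
      by_cases h : Even i.val
      · rw [if_pos h, if_neg (fun hc => (hpar.mp hc) h)]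
        exact hab
      · rw [if_neg h, if_pos (hpar.mpr h)]
        exact fun e => hab e.symm
  · push_neg at hall
    obtain ⟨i₀, hns⟩ := hall
    obtain ⟨a, haL, haN⟩ := Finset.not_subset.mp hns
    set s : ZMod (2*m) := i₀ + 1 with hs
    set f : ℕ → ℕ := greedy (fun t => L (s + ((t+1 : ℕ) : ZMod (2*m)))) a with hf
    have hfspec : ∀ t, f (t+1) ∈ L (s + ((t+1 : ℕ) : ZMod (2*m))) ∧ f (t+1) ≠ f t :=
      fun t => greedy_spec _ _ t (hL _)
    have hf0 : f 0 = a := rfl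
    refine ⟨fun i => f ((i - s).val), fun i => ?_, fun i => ?_⟩
    · dsimp only
      have hts : s + (((i - s).val : ℕ) : ZMod (2*m)) = i := by
        rw [ZMod.natCast_zmod_val]; ring
      rcases ht : (i - s).val with _ | t'
      · rw [ht] at hts
        push_cast at hts
        rw [add_zero] at hts
        rw [hf0, ← hts]
        exact haL
      · rw [ht] at hts
        have := (hfspec t').1
        rwa [hts] at this
    · dsimp only
      have hvlt : (i - s).val < 2*m := ZMod.val_lt _
      have hsucc : (i + 1 - s) = (i - s) + 1 := by ring
      have hv2 : (i + 1 - s).val = ((i-s).val + 1) % (2*m) := by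
        rw [hsucc, val_add_one h2m]
      rcases lt_or_ge ((i-s).val + 1) (2*m) with h | h
      · rw [hv2, Nat.mod_eq_of_lt h]
        exact fun e => (hfspec (i-s).val).2 e.symm
      · have ht : (i-s).val = 2*m - 1 := by omega
        have h0 : (i + 1 - s).val = 0 := by
          rw [hv2, show (i-s).val + 1 = 2*m by omega, Nat.mod_self]
        rw [h0, ht, hf0]
        have hmem := (hfspec (2*m-2)).1
        have hcast : ((2*m-2)+1 : ℕ) = (2*m-1 : ℕ) := by omega
        rw [hcast] at hmem
        have hio : s + ((2*m-1 : ℕ) : ZMod (2*m)) = i₀ := by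
          rw [Nat.cast_sub (by omega : 1 ≤ 2*m), ZMod.natCast_self, hs]
          push_cast
          ring
        rw [hio] at hmem
        exact fun e => haN (e ▸ hmem)

def scf (n j : ℕ) : ℕ := if j = n then 1 else j + 1
def prf (n j : ℕ) : ℕ := if j = 1 then n else j - 1

lemma scf_range {n j : ℕ} (hn : 1 ≤ n) (h1 : 1 ≤ j) (h2 : j ≤ n) :
    1 ≤ scf n j ∧ scf n j ≤ n := by unfold scf; split_ifs <;> omega
lemma prf_range {n j : ℕ} (hn : 1 ≤ n) (h1 : 1 ≤ j) (h2 : j ≤ n) :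
    1 ≤ prf n j ∧ prf n j ≤ n := by unfold prf; split_ifs <;> omega
lemma scf_prf {n j : ℕ} (h1 : 1 ≤ j) (h2 : j ≤ n) : scf n (prf n j) = j := by
  unfold scf prf; split_ifs <;> omega
lemma prf_scf {n j : ℕ} (h1 : 1 ≤ j) (h2 : j ≤ n) : prf n (scf n j) = j := by
  unfold scf prf; split_ifs <;> omega
lemma scf_mod4 {l j : ℕ} (h1 : 1 ≤ j) (h2 : j ≤ 4*l) : scf (4*l) j % 4 = (j + 1) % 4 := by
  unfold scf; split_ifs <;> omega
lemma prf_mod4 {l j : ℕ} (h1 : 1 ≤ j) (h2 : j ≤ 4*l) : prf (4*l) j % 4 = (j + 3) % 4 := by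
  unfold prf; split_ifs <;> omega

/-- (C4): a `4ℓ`-cycle `v₁v₂…v₄ℓ` with `d(vᵢ) ≤ k` when `4 ∣ i` and `d(vᵢ) = 2`
otherwise is `(k+1)`-reducible, for `k ≥ 5`. -/
theorem config_C4_reducible {V : Type*} [Fintype V] (k l : ℕ) (hk : 5 ≤ k) (hl : 1 ≤ l)
    (G : SimpleGraph V) (hΔ : ∀ z, (G.neighborSet z).ncard ≤ k)
    (v : ℕ → V) (hinj : Set.InjOn v (Set.Icc 1 (4 * l)))
    (hadj : ∀ j, 1 ≤ j → j < 4 * l → G.Adj (v j) (v (j + 1)))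
    (hclose : G.Adj (v (4 * l)) (v 1))
    (hdegdvd : ∀ j, 1 ≤ j → j ≤ 4 * l → 4 ∣ j → (G.neighborSet (v j)).ncard ≤ k)
    (hdeg2 : ∀ j, 1 ≤ j → j ≤ 4 * l → ¬ 4 ∣ j → (G.neighborSet (v j)).ncard = 2)
    (hred : ((G.induce {x | ∀ j, 1 ≤ j → j ≤ 4 * l → ¬ 4 ∣ j → x ≠ v j}).square.Choosable
      (k + 1))) :
    G.square.Choosable (k + 1) := by
  classical
  intro L hL
  set S : Set V := {x | ∀ j, 1 ≤ j → j ≤ 4 * l → ¬ 4 ∣ j → x ≠ v j} with hSdef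
  set P : ℕ → ℕ := prf (4*l) with hPdef
  set Q : ℕ → ℕ := scf (4*l) with hQdef
  have h4l : 4 ≤ 4*l := by omega
  have hQr : ∀ j, 1 ≤ j → j ≤ 4*l → 1 ≤ Q j ∧ Q j ≤ 4*l :=
    fun j a b => scf_range (by omega) a b
  have hPr : ∀ j, 1 ≤ j → j ≤ 4*l → 1 ≤ P j ∧ P j ≤ 4*l :=
    fun j a b => prf_range (by omega) a b
  have hQP : ∀ j, 1 ≤ j → j ≤ 4*l → Q (P j) = j := fun j a b => scf_prf a b
  have hPQ : ∀ j, 1 ≤ j → j ≤ 4*l → P (Q j) = j := fun j a b => prf_scf a b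
  have hQm : ∀ j, 1 ≤ j → j ≤ 4*l → Q j % 4 = (j + 1) % 4 := fun j a b => scf_mod4 a b
  have hPm : ∀ j, 1 ≤ j → j ≤ 4*l → P j % 4 = (j + 3) % 4 := fun j a b => prf_mod4 a b
  have hvinj : ∀ j j', 1 ≤ j → j ≤ 4*l → 1 ≤ j' → j' ≤ 4*l → v j = v j' → j = j' := by
    intro j j' a b c d e
    exact hinj (Set.mem_Icc.mpr ⟨a, b⟩) (Set.mem_Icc.mpr ⟨c, d⟩) e
  have hadjQ : ∀ j, 1 ≤ j → j ≤ 4*l → G.Adj (v j) (v (Q j)) := by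
    intro j h1 h2
    simp only [hQdef, scf]
    split_ifs with h
    · rw [h]; exact hclose
    · exact hadj j h1 (by omega)
  have hadjP : ∀ j, 1 ≤ j → j ≤ 4*l → G.Adj (v (P j)) (v j) := by
    intro j h1 h2
    have := hadjQ (P j) (hPr j h1 h2).1 (hPr j h1 h2).2
    rwa [hQP j h1 h2] at this
  -- membership in S
  have hvS : ∀ j, 1 ≤ j → j ≤ 4*l → 4 ∣ j → v j ∈ S := by
    intro j h1 h2 h4
    intro m hm1 hm2 hm4 e
    exact hm4 (hvinj j m h1 h2 hm1 hm2 e ▸ h4)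
  have hvnS : ∀ j, 1 ≤ j → j ≤ 4*l → ¬ 4 ∣ j → v j ∉ S := by
    intro j h1 h2 h4 hS
    exact hS j h1 h2 h4 rfl
  have hdelchar : ∀ x, x ∉ S → ∃ j, 1 ≤ j ∧ j ≤ 4*l ∧ ¬ 4 ∣ j ∧ x = v j := by
    intro x hx
    by_contra h
    push_neg at h
    exact hx (fun j h1 h2 h4 => h j h1 h2 h4)
  -- degree-2 neighborhoods
  have hnbhd : ∀ j, 1 ≤ j → j ≤ 4*l → ¬ 4 ∣ j →
      G.neighborSet (v j) = {v (P j), v (Q j)} := by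
    intro j h1 h2 h4
    have hcard := hdeg2 j h1 h2 h4
    have hne : v (P j) ≠ v (Q j) := by
      intro e
      have := hvinj (P j) (Q j) (hPr j h1 h2).1 (hPr j h1 h2).2 (hQr j h1 h2).1 (hQr j h1 h2).2 e
      revert this
      simp only [hPdef, hQdef]
      unfold scf prf
      split_ifs <;> omega
    have hsub : ({v (P j), v (Q j)} : Set V) ⊆ G.neighborSet (v j) := by
      rw [Set.insert_subset_iff, Set.singleton_subset_iff]
      exact ⟨(hadjP j h1 h2).symm, hadjQ j h1 h2⟩
    refine (Set.eq_of_subset_of_ncard_le hsub ?_ (Set.toFinite _)).symm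
    rw [hcard, Set.ncard_pair hne]
  have hadjdel : ∀ y z, z ∉ S → G.Adj y z →
      ∃ m, 1 ≤ m ∧ m ≤ 4*l ∧ ¬ 4 ∣ m ∧ z = v m ∧ (y = v (P m) ∨ y = v (Q m)) := by
    intro y z hz ha
    obtain ⟨m, h1, h2, h4, he⟩ := hdelchar z hz
    have hy : y ∈ G.neighborSet z := ha.symm
    rw [he, hnbhd m h1 h2 h4] at hy
    simp only [Set.mem_insert_iff, Set.mem_singleton_iff] at hy
    exact ⟨m, h1, h2, h4, he, hy⟩
  -- base coloring on S
  obtain ⟨c₀, hc₀mem, hc₀prop⟩ := hred (fun x => L x.1) (fun x => hL x.1)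
  -- forbidden colors for a deleted vertex
  set Forb : ℕ → Finset ℕ := fun j =>
    (Set.Finite.image (fun y : {x // x ∈ S} => c₀ y)
      (Set.toFinite {y : {x // x ∈ S} | G.square.Adj (v j) y.1})).toFinset with hForbdef
  have hForbMem : ∀ (j : ℕ) (y : {x // x ∈ S}), G.square.Adj (v j) y.1 → c₀ y ∈ Forb j := by
    intro j y hy
    simp only [hForbdef, Set.Finite.mem_toFinset]
    exact ⟨y, hy, rfl⟩
  -- core counting argument
  have hcore : ∀ j hb od mid mm, 1 ≤ j → j ≤ 4*l →
      G.neighborSet (v j) = {v hb, v mid} →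
      G.neighborSet (v mid) = {v j, v mm} →
      v mid ∉ S → v mm ∉ S → v od ∉ S →
      v j ∈ G.neighborSet (v hb) → v od ∈ G.neighborSet (v hb) → v j ≠ v od →
      (Forb j).card ≤ k - 1 := by
    intro j hb od mid mm h1 h2 hNj hNmid hmidS hmmS hodS hjN hodN hjod
    set D : Set {x // x ∈ S} := {y : {x // x ∈ S} | G.square.Adj (v j) y.1} with hDdef
    set B : Set V := insert (v hb) (G.neighborSet (v hb)) with hBdef
    have hsub : Subtype.val '' D ⊆ B \ {v j, v od} := by
      rintro x ⟨⟨x, hxS⟩, hxadj, rfl⟩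
      simp only [hDdef, Set.mem_setOf_eq] at hxadj
      show x ∈ B \ ({v j, v od} : Set V)
      constructor
      · rcases hxadj.2 with hA | ⟨z, hz1, hz2⟩
        · have hmx : x ∈ G.neighborSet (v j) := hA
          rw [hNj] at hmx
          simp only [Set.mem_insert_iff, Set.mem_singleton_iff] at hmx
          rcases hmx with h | h
          · rw [h]; exact Set.mem_insert _ _
          · rw [h] at hxS; exact absurd hxS hmidS
        · have hzmem : z ∈ G.neighborSet (v j) := hz1
          rw [hNj] at hzmem
          simp only [Set.mem_insert_iff, Set.mem_singleton_iff] at hzmem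
          rcases hzmem with h | h
          · rw [h] at hz2
            exact Set.mem_insert_of_mem _ hz2
          · rw [h] at hz2
            have hxm : x ∈ G.neighborSet (v mid) := hz2
            rw [hNmid] at hxm
            simp only [Set.mem_insert_iff, Set.mem_singleton_iff] at hxm
            rcases hxm with h' | h'
            · exact absurd h'.symm hxadj.1
            · rw [h'] at hxS; exact absurd hxS hmmS
      · simp only [Set.mem_insert_iff, Set.mem_singleton_iff]
        push_neg
        refine ⟨fun e => hxadj.1 e.symm, fun e => hodS (e ▸ hxS)⟩
    have hBfin : B.Finite := Set.toFinite _
    have hpairsub : ({v j, v od} : Set V) ⊆ B := by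
      rw [Set.insert_subset_iff, Set.singleton_subset_iff]
      exact ⟨Set.mem_insert_of_mem _ hjN, Set.mem_insert_of_mem _ hodN⟩
    have hc1 : (Forb j).card = ((fun y : {x // x ∈ S} => c₀ y) '' D).ncard := by
      simp only [hForbdef, hDdef]
      exact (Set.ncard_eq_toFinset_card _ _).symm
    have hc2 : ((fun y : {x // x ∈ S} => c₀ y) '' D).ncard ≤ D.ncard :=
      Set.ncard_image_le (Set.toFinite _)
    have hc3 : D.ncard = (Subtype.val '' D).ncard :=
      (Set.ncard_image_of_injective D Subtype.val_injective).symm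
    have hc4 : (Subtype.val '' D).ncard ≤ (B \ {v j, v od}).ncard :=
      Set.ncard_le_ncard hsub hBfin.diff
    have hc5 : (B \ {v j, v od}).ncard = B.ncard - ({v j, v od} : Set V).ncard :=
      Set.ncard_diff hpairsub (Set.toFinite _)
    have hc6 : ({v j, v od} : Set V).ncard = 2 := Set.ncard_pair hjod
    have hc7 : B.ncard ≤ (G.neighborSet (v hb)).ncard + 1 := Set.ncard_insert_le _ _
    have hc8 := hΔ (v hb)
    omega
  have hForbCard : ∀ j, 1 ≤ j → j ≤ 4*l → (j % 4 = 1 ∨ j % 4 = 3) →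
      (Forb j).card ≤ k - 1 := by
    intro j h1 h2 hodd
    rcases hodd with hm | hm
    · -- hub is P j, mid is Q j, mm is Q (Q j), od is P (P j)
      have hPj := hPr j h1 h2
      have hQj := hQr j h1 h2
      have hQQj := hQr (Q j) hQj.1 hQj.2
      have hPPj := hPr (P j) hPj.1 hPj.2
      have hQjm : Q j % 4 = 2 := by have := hQm j h1 h2; omega
      have hQQjm : Q (Q j) % 4 = 3 := by have := hQm (Q j) hQj.1 hQj.2; omega
      have hPPjm : P (P j) % 4 = 3 := by have := hPm (P j) hPj.1 hPj.2; have := hPm j h1 h2; omega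
      refine hcore j (P j) (P (P j)) (Q j) (Q (Q j)) h1 h2 (hnbhd j h1 h2 (by omega)) ?_ ?_ ?_ ?_ ?_ ?_ ?_
      · rw [hnbhd (Q j) hQj.1 hQj.2 (by omega), hPQ j h1 h2]
      · exact hvnS (Q j) hQj.1 hQj.2 (by omega)
      · exact hvnS (Q (Q j)) hQQj.1 hQQj.2 (by omega)
      · exact hvnS (P (P j)) hPPj.1 hPPj.2 (by omega)
      · exact (hadjP j h1 h2)
      · have := hadjP (P j) hPj.1 hPj.2
        exact this.symm
      · intro e
        have := hvinj j (P (P j)) h1 h2 hPPj.1 hPPj.2 e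
        omega
    · -- hub is Q j, mid is P j, mm is P (P j), od is Q (Q j)
      have hPj := hPr j h1 h2
      have hQj := hQr j h1 h2
      have hQQj := hQr (Q j) hQj.1 hQj.2
      have hPPj := hPr (P j) hPj.1 hPj.2
      have hPjm : P j % 4 = 2 := by have := hPm j h1 h2; omega
      have hPPjm : P (P j) % 4 = 1 := by have := hPm (P j) hPj.1 hPj.2; have := hPm j h1 h2; omega
      have hQQjm : Q (Q j) % 4 = 1 := by have := hQm (Q j) hQj.1 hQj.2; have := hQm j h1 h2; omega
      refine hcore j (Q j) (Q (Q j)) (P j) (P (P j)) h1 h2 ?_ ?_ ?_ ?_ ?_ ?_ ?_ ?_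
      · rw [hnbhd j h1 h2 (by omega)]
        exact Set.pair_comm _ _
      · rw [hnbhd (P j) hPj.1 hPj.2 (by omega), hQP j h1 h2]
        exact Set.pair_comm _ _
      · exact hvnS (P j) hPj.1 hPj.2 (by omega)
      · exact hvnS (P (P j)) hPPj.1 hPPj.2 (by omega)
      · exact hvnS (Q (Q j)) hQQj.1 hQQj.2 (by omega)
      · exact (hadjQ j h1 h2).symm
      · exact hadjQ (Q j) hQj.1 hQj.2
      · intro e
        have := hvinj j (Q (Q j)) h1 h2 hQQj.1 hQQj.2 e
        omega
  -- reduced lists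
  set Lred : ℕ → Finset ℕ := fun j => L (v j) \ Forb j with hLreddef
  have hLredCard : ∀ j, 1 ≤ j → j ≤ 4*l → (j % 4 = 1 ∨ j % 4 = 3) → 2 ≤ (Lred j).card := by
    intro j h1 h2 hodd
    have hf := hForbCard j h1 h2 hodd
    have hl1 := hL (v j)
    have hsd := Finset.le_card_sdiff (Forb j) (L (v j))
    simp only [hLreddef]
    omega
  haveI : NeZero (2*l) := ⟨by omega⟩
  have hocl : ∀ i : ZMod (2*l), 2 ≤ (Lred (2*i.val+1)).card := by
    intro i
    have hv := ZMod.val_lt i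
    exact hLredCard _ (by omega) (by omega) (by omega)
  obtain ⟨codd, hcoddmem, hcoddprop⟩ :=
    evenCycle_choosable l hl (fun i => Lred (2*i.val+1)) hocl
  set idx : ℕ → ZMod (2*l) := fun j => (((j-1)/2 : ℕ) : ZMod (2*l)) with hidxdef
  have hidxval : ∀ j, 1 ≤ j → j ≤ 4*l → j % 2 = 1 → 2 * (idx j).val + 1 = j := by
    intro j h1 h2 hodd
    have hlt : (j-1)/2 < 2*l := by omega
    simp only [hidxdef]
    rw [ZMod.val_cast_of_lt hlt]
    omega
  have hidxsucc : ∀ j, 1 ≤ j → j ≤ 4*l → j % 2 = 1 → idx (Q (Q j)) = idx j + 1 := by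
    intro j h1 h2 hodd
    rcases eq_or_lt_of_le (show j ≤ 4*l - 1 by omega) with he | hlt
    · have hq1 : Q j = 4*l := by simp only [hQdef]; unfold scf; split_ifs <;> omega
      have hq2 : Q (4*l) = 1 := by simp only [hQdef]; unfold scf; split_ifs <;> omega
      rw [hq1, hq2]
      simp only [hidxdef]
      rw [show (1-1)/2 = 0 by omega, show (j-1)/2 = 2*l-1 by omega]
      rw [show ((2*l-1 : ℕ) : ZMod (2*l)) + 1 = ((2*l-1+1 : ℕ) : ZMod (2*l)) by push_cast; ring,
        show 2*l-1+1 = 2*l by omega, ZMod.natCast_self]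
      simp
    · have hq1 : Q j = j + 1 := by simp only [hQdef]; unfold scf; split_ifs <;> omega
      have hq2 : Q (j+1) = j + 2 := by simp only [hQdef]; unfold scf; split_ifs <;> omega
      rw [hq1, hq2]
      simp only [hidxdef]
      rw [show (j+2-1)/2 = (j-1)/2 + 1 by omega]
      push_cast
      ring
  -- the index of a deleted vertex
  set J : V → ℕ := fun x => if h : x ∈ S then 0 else Classical.choose (hdelchar x h) with hJdef
  have hJspec : ∀ x (hx : x ∉ S), 1 ≤ J x ∧ J x ≤ 4*l ∧ ¬ 4 ∣ J x ∧ x = v (J x) := by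
    intro x hx
    simp only [hJdef]
    rw [dif_neg hx]
    exact Classical.choose_spec (hdelchar x hx)
  have hJv : ∀ j, 1 ≤ j → j ≤ 4*l → ¬ 4 ∣ j → J (v j) = j := by
    intro j h1 h2 h4
    have hx := hvnS j h1 h2 h4
    obtain ⟨a1, a2, a3, a4⟩ := hJspec (v j) hx
    exact (hvinj j (J (v j)) h1 h2 a1 a2 a4).symm
  -- colorings
  set cS : V → ℕ := fun x => if h : x ∈ S then c₀ ⟨x, h⟩ else 0 with hcSdef
  set cO : V → ℕ := fun x =>
    if x ∈ S then cS x else if J x % 4 = 2 then 0 else codd (idx (J x)) with hcOdef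
  set Fmid : ℕ → Finset ℕ := fun j =>
    {cO (v (P (P j))), cO (v (P j)), cO (v (Q j)), cO (v (Q (Q j)))} with hFmiddef
  set pk : ℕ → ℕ := fun j =>
    if h : (L (v j) \ Fmid j).Nonempty then h.choose else 0 with hpkdef
  set c : V → ℕ := fun x =>
    if x ∈ S then cS x else if J x % 4 = 2 then pk (J x) else codd (idx (J x)) with hcdef
  have hFmidcard : ∀ j, (Fmid j).card ≤ 4 := by
    intro j
    simp only [hFmiddef]
    apply le_trans (Finset.card_insert_le _ _)
    have h1 := Finset.card_insert_le (cO (v (P j)))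
      ({cO (v (Q j)), cO (v (Q (Q j)))} : Finset ℕ)
    have h2 := Finset.card_insert_le (cO (v (Q j))) ({cO (v (Q (Q j)))} : Finset ℕ)
    have h3 : ({cO (v (Q (Q j)))} : Finset ℕ).card = 1 := Finset.card_singleton _
    omega
  have hpkspec : ∀ j, pk j ∈ L (v j) ∧ pk j ∉ Fmid j := by
    intro j
    have hcard : 0 < (L (v j) \ Fmid j).card := by
      have := Finset.le_card_sdiff (Fmid j) (L (v j))
      have := hL (v j)
      have := hFmidcard j
      omega
    have hne : (L (v j) \ Fmid j).Nonempty := Finset.card_pos.1 hcard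
    have hsp := hne.choose_spec
    rw [Finset.mem_sdiff] at hsp
    simp only [hpkdef]
    rw [dif_pos hne]
    exact hsp
  -- value lemmas
  have hcSval : ∀ x (h : x ∈ S), c x = c₀ ⟨x, h⟩ := by
    intro x h
    simp only [hcdef, if_pos h, hcSdef, dif_pos h]
  have hcmid : ∀ j, 1 ≤ j → j ≤ 4*l → j % 4 = 2 → c (v j) = pk j := by
    intro j h1 h2 hm
    have hns := hvnS j h1 h2 (by omega)
    simp only [hcdef, if_neg hns, hJv j h1 h2 (by omega), if_pos hm]
  have hcodd : ∀ j, 1 ≤ j → j ≤ 4*l → (j % 4 = 1 ∨ j % 4 = 3) → c (v j) = codd (idx j) := by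
    intro j h1 h2 hm
    have hns := hvnS j h1 h2 (by omega)
    have hJj : J (v j) = j := hJv j h1 h2 (by omega)
    simp only [hcdef, if_neg hns, hJj, if_neg (show ¬ j % 4 = 2 by omega)]
  have hcOc : ∀ x, (x ∈ S ∨ J x % 4 ≠ 2) → cO x = c x := by
    intro x h
    by_cases hx : x ∈ S
    · simp only [hcOdef, hcdef, if_pos hx]
    · have h2 : J x % 4 ≠ 2 := h.resolve_left hx
      simp only [hcOdef, hcdef, if_neg hx, if_neg h2]
  -- conflict lemmas
  have hSdel : ∀ (x : V) (hx : x ∈ S) (j : ℕ), 1 ≤ j → j ≤ 4*l → ¬ 4 ∣ j →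
      G.square.Adj (v j) x → c (v j) ≠ c x := by
    intro x hx j h1 h2 h4 hadjvx
    have hPj := hPr j h1 h2
    have hQj := hQr j h1 h2
    rcases (show j % 4 = 2 ∨ (j % 4 = 1 ∨ j % 4 = 3) by omega) with hm | hm
    · have hPjm : P j % 4 = 1 := by have := hPm j h1 h2; omega
      have hQjm : Q j % 4 = 3 := by have := hQm j h1 h2; omega
      have hxcases : x = v (P (P j)) ∨ x = v (Q (Q j)) := by
        rcases hadjvx.2 with hA | ⟨z, hz1, hz2⟩
        · exfalso
          have hmx : x ∈ G.neighborSet (v j) := hA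
          rw [hnbhd j h1 h2 (by omega)] at hmx
          simp only [Set.mem_insert_iff, Set.mem_singleton_iff] at hmx
          rcases hmx with h | h
          · rw [h] at hx; exact hvnS (P j) hPj.1 hPj.2 (by omega) hx
          · rw [h] at hx; exact hvnS (Q j) hQj.1 hQj.2 (by omega) hx
        · have hzmem : z ∈ G.neighborSet (v j) := hz1
          rw [hnbhd j h1 h2 (by omega)] at hzmem
          simp only [Set.mem_insert_iff, Set.mem_singleton_iff] at hzmem
          rcases hzmem with h | h
          · left
            rw [h] at hz2
            have hxm : x ∈ G.neighborSet (v (P j)) := hz2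
            rw [hnbhd (P j) hPj.1 hPj.2 (by omega), hQP j h1 h2] at hxm
            simp only [Set.mem_insert_iff, Set.mem_singleton_iff] at hxm
            rcases hxm with h' | h'
            · exact h'
            · exfalso; rw [h'] at hx; exact hvnS j h1 h2 (by omega) hx
          · right
            rw [h] at hz2
            have hxm : x ∈ G.neighborSet (v (Q j)) := hz2
            rw [hnbhd (Q j) hQj.1 hQj.2 (by omega), hPQ j h1 h2] at hxm
            simp only [Set.mem_insert_iff, Set.mem_singleton_iff] at hxm
            rcases hxm with h' | h'
            · exfalso; rw [h'] at hx; exact hvnS j h1 h2 (by omega) hx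
            · exact h'
      rw [hcmid j h1 h2 hm]
      intro e
      apply (hpkspec j).2
      rw [e]
      rcases hxcases with h | h
      · rw [h, ← hcOc (v (P (P j))) (Or.inl (h ▸ hx))]
        simp only [hFmiddef]
        exact Finset.mem_insert_self _ _
      · rw [h, ← hcOc (v (Q (Q j))) (Or.inl (h ▸ hx))]
        simp only [hFmiddef]
        simp
    · rw [hcodd j h1 h2 hm, hcSval x hx]
      intro e
      have hforb : c₀ ⟨x, hx⟩ ∈ Forb j := hForbMem j ⟨x, hx⟩ hadjvx
      have hmem := hcoddmem (idx j)
      rw [hidxval j h1 h2 (by omega)] at hmem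
      simp only [hLreddef] at hmem
      exact (Finset.mem_sdiff.1 hmem).2 (e ▸ hforb)
  have hmidadj : ∀ jm, 1 ≤ jm → jm ≤ 4*l → jm % 4 = 2 →
      c (v jm) ≠ c (v (P jm)) ∧ c (v jm) ≠ c (v (Q jm)) := by
    intro jm g1 g2 gm
    have hPg := hPr jm g1 g2
    have hQg := hQr jm g1 g2
    have hPgm : P jm % 4 = 1 := by have := hPm jm g1 g2; omega
    have hQgm : Q jm % 4 = 3 := by have := hQm jm g1 g2; omega
    rw [hcmid jm g1 g2 gm]
    constructor
    · have hJ1 : J (v (P jm)) = P jm := hJv _ hPg.1 hPg.2 (by omega)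
      have hc1 : cO (v (P jm)) = c (v (P jm)) := hcOc _ (Or.inr (by rw [hJ1]; omega))
      rw [← hc1]
      intro e
      apply (hpkspec jm).2
      rw [e]
      simp only [hFmiddef]
      simp
    · have hJ1 : J (v (Q jm)) = Q jm := hJv _ hQg.1 hQg.2 (by omega)
      have hc1 : cO (v (Q jm)) = c (v (Q jm)) := hcOc _ (Or.inr (by rw [hJ1]; omega))
      rw [← hc1]
      intro e
      apply (hpkspec jm).2
      rw [e]
      simp only [hFmiddef]
      simp
  have hoddadj : ∀ j0, 1 ≤ j0 → j0 ≤ 4*l → j0 % 2 = 1 →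
      c (v j0) ≠ c (v (Q (Q j0))) := by
    intro j0 g1 g2 godd
    have hQ0 := hQr j0 g1 g2
    have hQQ0 := hQr (Q j0) hQ0.1 hQ0.2
    have hQ0m := hQm j0 g1 g2
    have hQQ0m := hQm (Q j0) hQ0.1 hQ0.2
    rw [hcodd j0 g1 g2 (by omega), hcodd (Q (Q j0)) hQQ0.1 hQQ0.2 (by omega),
        hidxsucc j0 g1 g2 godd]
    exact hcoddprop (idx j0)
  have hdd : ∀ j j', 1 ≤ j → j ≤ 4*l → ¬ 4 ∣ j → 1 ≤ j' → j' ≤ 4*l → ¬ 4 ∣ j' →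
      G.square.Adj (v j) (v j') → c (v j) ≠ c (v j') := by
    intro j j' h1 h2 h4 h1' h2' h4' hadj2
    have hPj := hPr j h1 h2
    have hQj := hQr j h1 h2
    have hPPj := hPr (P j) hPj.1 hPj.2
    have hQQj := hQr (Q j) hQj.1 hQj.2
    have hne : v j ≠ v j' := hadj2.1
    have hnejj' : j ≠ j' := fun e => hne (by rw [e])
    have hclass : j' = P j ∨ j' = Q j ∨ j' = P (P j) ∨ j' = Q (Q j) := by
      rcases hadj2.2 with hA | ⟨z, hz1, hz2⟩
      · have hmx : v j' ∈ G.neighborSet (v j) := hA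
        rw [hnbhd j h1 h2 h4] at hmx
        simp only [Set.mem_insert_iff, Set.mem_singleton_iff] at hmx
        rcases hmx with h | h
        · exact Or.inl (hvinj j' (P j) h1' h2' hPj.1 hPj.2 h)
        · exact Or.inr (Or.inl (hvinj j' (Q j) h1' h2' hQj.1 hQj.2 h))
      · have hzmem : z ∈ G.neighborSet (v j) := hz1
        rw [hnbhd j h1 h2 h4] at hzmem
        simp only [Set.mem_insert_iff, Set.mem_singleton_iff] at hzmem
        rcases hzmem with h | h
        · by_cases h4P : 4 ∣ P j
          · rw [h] at hz2
            obtain ⟨m, hm1, hm2, hm4, hem, hy⟩ :=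
              hadjdel (v (P j)) (v j') (hvnS j' h1' h2' h4') hz2
            have hmj' : j' = m := hvinj j' m h1' h2' hm1 hm2 hem
            subst hmj'
            rcases hy with hy | hy
            · exfalso
              have hPj' := hPr j' h1' h2'
              have heq : P j = P j' := hvinj (P j) (P j') hPj.1 hPj.2 hPj'.1 hPj'.2 hy
              have e2 : Q (P j) = Q (P j') := by rw [heq]
              rw [hQP j h1 h2, hQP j' h1' h2'] at e2
              exact hnejj' e2
            · have hQj' := hQr j' h1' h2'
              have heq : P j = Q j' := hvinj (P j) (Q j') hPj.1 hPj.2 hQj'.1 hQj'.2 hy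
              have e2 : P (P j) = P (Q j') := by rw [heq]
              rw [hPQ j' h1' h2'] at e2
              exact Or.inr (Or.inr (Or.inl e2.symm))
          · rw [h] at hz2
            have hxm : v j' ∈ G.neighborSet (v (P j)) := hz2
            rw [hnbhd (P j) hPj.1 hPj.2 h4P, hQP j h1 h2] at hxm
            simp only [Set.mem_insert_iff, Set.mem_singleton_iff] at hxm
            rcases hxm with h' | h'
            · exact Or.inr (Or.inr (Or.inl (hvinj j' (P (P j)) h1' h2' hPPj.1 hPPj.2 h')))
            · exact absurd h'.symm hne
        · by_cases h4Q : 4 ∣ Q j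
          · rw [h] at hz2
            obtain ⟨m, hm1, hm2, hm4, hem, hy⟩ :=
              hadjdel (v (Q j)) (v j') (hvnS j' h1' h2' h4') hz2
            have hmj' : j' = m := hvinj j' m h1' h2' hm1 hm2 hem
            subst hmj'
            rcases hy with hy | hy
            · have hPj' := hPr j' h1' h2'
              have heq : Q j = P j' := hvinj (Q j) (P j') hQj.1 hQj.2 hPj'.1 hPj'.2 hy
              have e2 : Q (Q j) = Q (P j') := by rw [heq]
              rw [hQP j' h1' h2'] at e2
              exact Or.inr (Or.inr (Or.inr e2.symm))
            · exfalso
              have hQj' := hQr j' h1' h2'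
              have heq : Q j = Q j' := hvinj (Q j) (Q j') hQj.1 hQj.2 hQj'.1 hQj'.2 hy
              have e2 : P (Q j) = P (Q j') := by rw [heq]
              rw [hPQ j h1 h2, hPQ j' h1' h2'] at e2
              exact hnejj' e2
          · rw [h] at hz2
            have hxm : v j' ∈ G.neighborSet (v (Q j)) := hz2
            rw [hnbhd (Q j) hQj.1 hQj.2 h4Q, hPQ j h1 h2] at hxm
            simp only [Set.mem_insert_iff, Set.mem_singleton_iff] at hxm
            rcases hxm with h' | h'
            · exact absurd h'.symm hne
            · exact Or.inr (Or.inr (Or.inr (hvinj j' (Q (Q j)) h1' h2' hQQj.1 hQQj.2 h')))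
    have hPjm := hPm j h1 h2
    have hQjm := hQm j h1 h2
    have hPPjm := hPm (P j) hPj.1 hPj.2
    have hQQjm := hQm (Q j) hQj.1 hQj.2
    rcases (show j % 4 = 1 ∨ j % 4 = 2 ∨ j % 4 = 3 by omega) with hm | hm | hm
    · rcases hclass with he' | he' | he' | he'
      · exfalso; omega
      · subst he'
        have := (hmidadj (Q j) hQj.1 hQj.2 (by omega)).1
        rw [hPQ j h1 h2] at this
        exact this.symm
      · subst he'
        have := hoddadj (P (P j)) hPPj.1 hPPj.2 (by omega)
        rw [hQP (P j) hPj.1 hPj.2, hQP j h1 h2] at this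
        exact this.symm
      · subst he'
        exact hoddadj j h1 h2 (by omega)
    · rcases hclass with he' | he' | he' | he'
      · subst he'
        exact (hmidadj j h1 h2 hm).1
      · subst he'
        exact (hmidadj j h1 h2 hm).2
      · exfalso; omega
      · exfalso; omega
    · rcases hclass with he' | he' | he' | he'
      · subst he'
        have := (hmidadj (P j) hPj.1 hPj.2 (by omega)).2
        rw [hQP j h1 h2] at this
        exact this.symm
      · exfalso; omega
      · subst he'
        have := hoddadj (P (P j)) hPPj.1 hPPj.2 (by omega)
        rw [hQP (P j) hPj.1 hPj.2, hQP j h1 h2] at this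
        exact this.symm
      · subst he'
        exact hoddadj j h1 h2 (by omega)
  refine ⟨c, ?_, ?_⟩
  · intro x
    by_cases hx : x ∈ S
    · rw [hcSval x hx]
      exact hc₀mem ⟨x, hx⟩
    · obtain ⟨h1, h2, h4, he⟩ := hJspec x hx
      by_cases hm : J x % 4 = 2
      · rw [he, hcmid (J x) h1 h2 hm]
        exact (hpkspec (J x)).1
      · rw [he, hcodd (J x) h1 h2 (by omega)]
        have hmem := hcoddmem (idx (J x))
        rw [hidxval (J x) h1 h2 (by omega)] at hmem
        simp only [hLreddef] at hmem
        exact (Finset.mem_sdiff.1 hmem).1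
  · intro x y hxy
    by_cases hx : x ∈ S
    · by_cases hy : y ∈ S
      · have hadjind : ((G.induce S).square).Adj ⟨x, hx⟩ ⟨y, hy⟩ := by
          refine ⟨fun e => hxy.1 (congrArg Subtype.val e), ?_⟩
          rcases hxy.2 with hA | ⟨z, hz1, hz2⟩
          · exact Or.inl (by simpa using hA)
          · by_cases hzS : z ∈ S
            · exact Or.inr ⟨⟨z, hzS⟩, by simpa using hz1, by simpa using hz2⟩
            · exfalso
              obtain ⟨m, hm1, hm2, hm4, hem, hyx⟩ := hadjdel x z hzS hz1
              obtain ⟨m', hm1', hm2', hm4', hem', hyy⟩ := hadjdel y z hzS hz2.symm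
              have hmm' : m = m' := hvinj m m' hm1 hm2 hm1' hm2' (by rw [← hem, ← hem'])
              subst hmm'
              have hPmr := hPr m hm1 hm2
              have hQmr := hQr m hm1 hm2
              have hxdvd : ∀ t, 1 ≤ t → t ≤ 4*l → x = v t → 4 ∣ t := by
                intro t t1 t2 e
                by_contra ht
                exact hvnS t t1 t2 ht (e ▸ hx)
              have hydvd : ∀ t, 1 ≤ t → t ≤ 4*l → y = v t → 4 ∣ t := by
                intro t t1 t2 e
                by_contra ht
                exact hvnS t t1 t2 ht (e ▸ hy)
              have hPmm := hPm m hm1 hm2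
              have hQmm := hQm m hm1 hm2
              rcases hyx with e1 | e1 <;> rcases hyy with e2 | e2
              · exact hxy.1 (by rw [e1, e2])
              · have d1 := hxdvd _ hPmr.1 hPmr.2 e1
                have d2 := hydvd _ hQmr.1 hQmr.2 e2
                omega
              · have d1 := hxdvd _ hQmr.1 hQmr.2 e1
                have d2 := hydvd _ hPmr.1 hPmr.2 e2
                omega
              · exact hxy.1 (by rw [e1, e2])
        rw [hcSval x hx, hcSval y hy]
        exact hc₀prop hadjind
      · obtain ⟨j, h1, h2, h4, he⟩ := hdelchar y hy
        subst he
        exact fun e => hSdel x hx j h1 h2 h4 hxy.symm e.symm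
    · by_cases hy : y ∈ S
      · obtain ⟨j, h1, h2, h4, he⟩ := hdelchar x hx
        subst he
        exact hSdel y hy j h1 h2 h4 hxy
      · obtain ⟨j, h1, h2, h4, he⟩ := hdelchar x hx
        obtain ⟨j', h1', h2', h4', he'⟩ := hdelchar y hy
        subst he
        subst he'
        exact hdd j j' h1 h2 h4 h1' h2' h4' hxy
end
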